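/- Let m and M be invertible 2×2 matrices representing the deformed and reference edge matrices of a triangle, with F = m M⁻¹. For a differentiable energy density W, the derivative of E = det(G)·W(F G⁻¹)·(det M)/2 with respect to the deformed vertex positions satisfies: the force on vertex k from the triangle equals -(1/2)·σ·v⊥, where σ is the Cauchy stress σ = (det F_e)⁻¹ (∂W/∂F_e) F_eᵀ with F_e = F G⁻¹, and v⊥ is the 90°-counterclockwise rotation of the edge vector opposite vertex k in the deformed triangle. -/

import Mathlib

open Matrix

set_option maxHeartbeats 2000000

attribute [local instance] Matrix.normedAddCommGroup Matrix.normedSpace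

noncomputable def edgeLin (B : Matrix (Fin 2) (Fin 2) ℝ) :
    (Fin 2 → ℝ) →L[ℝ] Matrix (Fin 2) (Fin 2) ℝ :=
  LinearMap.toContinuousLinearMap
  { toFun := fun x => (Matrix.of fun i _ => x i) * B
    map_add' := by
      intro x y
      ext i j
      simp [Matrix.mul_apply, add_mul, Finset.sum_add_distrib]
    map_smul' := by
      intro c x
      ext i j
      simp [Matrix.mul_apply, Finset.mul_sum, mul_assoc]
      ring }

/-- Uniform-strain triangle nodal force formula: for the element energy
E(φᵏ) = det(G)·W(m M⁻¹ G⁻¹)·(det M)/2, where m is the deformed edge matrix and M the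
reference edge matrix, the derivative with respect to the vertex φᵏ is
(1/2)·σ·φ^{k⊥}, i.e. the nodal force is -(1/2)·σ·φ^{k⊥}, with σ the Cauchy stress and
φ^{k⊥} the 90°-counterclockwise rotation of the opposite deformed edge vector. -/
theorem triangle_nodal_force_formula
    (W : Matrix (Fin 2) (Fin 2) ℝ → ℝ)
    (G M P : Matrix (Fin 2) (Fin 2) ℝ)
    (φk φm φp : Fin 2 → ℝ)
    -- deformed edge matrix as a function of the position x of vertex k
    (mOf : (Fin 2 → ℝ) → Matrix (Fin 2) (Fin 2) ℝ)
    (hmOf : mOf = fun x => Matrix.of fun i j => (if j = 0 then φm i else φp i) - x i)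
    (hG : IsUnit G.det) (hM : IsUnit M.det) (hm : IsUnit (mOf φk).det)
    -- elastic deformation at the current position
    (Fe : Matrix (Fin 2) (Fin 2) ℝ) (hFe : Fe = mOf φk * M⁻¹ * G⁻¹)
    (hFedet : 0 < Fe.det)
    (hW : DifferentiableAt ℝ W Fe)
    -- P represents ∂W/∂F_e via the Frobenius pairing
    (hP : ∀ K : Matrix (Fin 2) (Fin 2) ℝ, fderiv ℝ W Fe K = (Pᵀ * K).trace)
    -- Cauchy stress
    (σ : Matrix (Fin 2) (Fin 2) ℝ) (hσ : σ = (Fe.det)⁻¹ • (P * Feᵀ))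
    -- rotated opposite edge vector
    (vperp : Fin 2 → ℝ)
    (hvperp : vperp = (!![0, -1; 1, 0] : Matrix (Fin 2) (Fin 2) ℝ).mulVec
      (fun i => φp i - φm i)) :
    ∀ h : Fin 2 → ℝ,
      fderiv ℝ (fun x => G.det * W (mOf x * M⁻¹ * G⁻¹) * M.det / 2) φk h
        = (1 / 2) * ∑ i, σ.mulVec vperp i * h i := by
  intro h
  subst hσ hvperp hFe hmOf
  have hMd : M.det ≠ 0 := hM.ne_zero
  have hGd : G.det ≠ 0 := hG.ne_zero
  have hmd := hm.ne_zero
  set mk : Matrix (Fin 2) (Fin 2) ℝ :=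
    Matrix.of fun i j => (if j = 0 then φm i else φp i) - φk i with hmk
  set B := M⁻¹ * G⁻¹ with hB
  set C : Matrix (Fin 2) (Fin 2) ℝ :=
    Matrix.of fun i j => (if j = 0 then φm i else φp i) with hC
  have hfun : (fun x : Fin 2 → ℝ =>
      (Matrix.of fun i j => (if j = 0 then φm i else φp i) - x i) * M⁻¹ * G⁻¹)
      = fun x => C * B - edgeLin B x := by
    funext x
    have h1 : (Matrix.of fun i j => (if j = 0 then φm i else φp i) - x i)
        = C - Matrix.of fun i _ => x i := by ext i j; simp [hC]
    rw [h1, sub_mul, sub_mul, Matrix.mul_assoc, Matrix.mul_assoc]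
    rfl
  have hg : HasFDerivAt (fun x : Fin 2 → ℝ =>
      (Matrix.of fun i j => (if j = 0 then φm i else φp i) - x i) * M⁻¹ * G⁻¹)
      (-(edgeLin B)) φk := by
    rw [hfun]
    exact (edgeLin B).hasFDerivAt.const_sub (C * B)
  have hWd : HasFDerivAt W
      (fderiv ℝ W (mk * M⁻¹ * G⁻¹)) (mk * M⁻¹ * G⁻¹) := hW.hasFDerivAt
  have hcomp : HasFDerivAt (fun x : Fin 2 → ℝ =>
      W ((Matrix.of fun i j => (if j = 0 then φm i else φp i) - x i) * M⁻¹ * G⁻¹))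
      ((fderiv ℝ W (mk * M⁻¹ * G⁻¹)).comp (-(edgeLin B))) φk :=
    hWd.comp φk hg
  have htot := hcomp.const_mul (G.det * M.det / 2)
  have hfeq : (fun x : Fin 2 → ℝ => G.det *
      W ((Matrix.of fun i j => (if j = 0 then φm i else φp i) - x i) * M⁻¹ * G⁻¹) * M.det / 2)
      = fun x => (G.det * M.det / 2) *
      W ((Matrix.of fun i j => (if j = 0 then φm i else φp i) - x i) * M⁻¹ * G⁻¹) := by
    funext x; ring
  rw [hfeq, htot.fderiv]
  simp only [ContinuousLinearMap.smul_apply, ContinuousLinearMap.coe_comp',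
    Function.comp_apply, ContinuousLinearMap.neg_apply, smul_eq_mul]
  have hedge : edgeLin B h = (Matrix.of fun i _ => h i) * B := rfl
  rw [hP, hedge]
  -- now pure algebra
  have hdet : (mk * M⁻¹ * G⁻¹).det = mk.det * M.det⁻¹ * G.det⁻¹ := by
    rw [Matrix.det_mul, Matrix.det_mul, Matrix.det_nonsing_inv, Matrix.det_nonsing_inv]
    simp [Ring.inverse_eq_inv']
  have hd : (fun i => φp i - φm i) = mk.mulVec ![-1, 1] := by
    funext i
    simp [hmk, Matrix.mulVec, dotProduct, Fin.sum_univ_two]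
  have hkey : (mk * B)ᵀ.mulVec ((!![0, -1; 1, 0] : Matrix (Fin 2) (Fin 2) ℝ).mulVec
      (fun i => φp i - φm i)) = mk.det • (Bᵀ.mulVec ![-1, -1]) := by
    rw [hd]
    funext i
    fin_cases i <;>
      simp [Matrix.mulVec, dotProduct, Matrix.mul_apply, Fin.sum_univ_two,
        Matrix.det_fin_two, Matrix.transpose_apply] <;> ring
  have htr : (Pᵀ * ((Matrix.of fun i _ => h i) * B)).trace
      = ∑ i, ((P * Bᵀ).mulVec ![1, 1]) i * h i := by
    simp [Matrix.trace_fin_two, Matrix.mul_apply, Matrix.mulVec, dotProduct,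
      Fin.sum_univ_two, Matrix.transpose_apply]
    ring
  have hT : (P * Bᵀ).mulVec ![-1, -1] = -((P * Bᵀ).mulVec ![1, 1]) := by
    funext i
    fin_cases i <;> simp [Matrix.mulVec, dotProduct, Fin.sum_univ_two] <;> ring
  have hFe2 : mk * M⁻¹ * G⁻¹ = mk * B := by rw [hB, Matrix.mul_assoc]
  have hRHSv : ((mk * M⁻¹ * G⁻¹).det⁻¹ • (P * (mk * M⁻¹ * G⁻¹)ᵀ)).mulVec
      ((!![0, -1; 1, 0] : Matrix (Fin 2) (Fin 2) ℝ).mulVec (fun i => φp i - φm i))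
      = ((mk.det * M.det⁻¹ * G.det⁻¹)⁻¹ * mk.det) •
        (-((P * Bᵀ).mulVec ![1, 1])) := by
    rw [Matrix.smul_mulVec, hdet, hFe2, ← Matrix.mulVec_mulVec, hkey,
      Matrix.mulVec_smul, Matrix.mulVec_mulVec, hT, smul_smul]
  rw [mul_neg, Matrix.trace_neg, htr, hRHSv]
  simp only [Pi.smul_apply, Pi.neg_apply, smul_eq_mul, Fin.sum_univ_two, Finset.mul_sum]
  have hmd' : mk.det ≠ 0 := hmd
  field_simp
  ring
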